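/- arXiv:math/0205067 — 3 statements merged into one kernel-verified Lean document; each statement's English description precedes it below -/
import Mathlib

section
/- Let X be a topological space, let D₁ and D₂ be irreducible topological spaces, and let f : D₁ × D₂ → X be a map which is separately continuous, i.e., for every d₁ ∈ D₁ the map d₂ ↦ f(d₁, d₂) is continuous, and for every d₂ ∈ D₂ the map d₁ ↦ f(d₁, d₂) is continuous. Then the image of f, i.e., the set range(f) = { f(d₁, d₂) : d₁ ∈ D₁, d₂ ∈ D₂ } ⊆ X, is an irreducible subset of X. -/
/-- If `D₁` and `D₂` are irreducible topological spaces and `f : D₁ × D₂ → X` is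
separately continuous, then the range of `f` is an irreducible subset of `X`. -/
theorem range_isIrreducible_of_separately_continuous
    {X D₁ D₂ : Type*} [TopologicalSpace X] [TopologicalSpace D₁] [TopologicalSpace D₂]
    [IrreducibleSpace D₁] [IrreducibleSpace D₂]
    (f : D₁ × D₂ → X)
    (h₁ : ∀ d₁ : D₁, Continuous fun d₂ : D₂ => f (d₁, d₂))
    (h₂ : ∀ d₂ : D₂, Continuous fun d₁ : D₁ => f (d₁, d₂)) :
    IsIrreducible (Set.range f) := by
  constructor
  · exact Set.range_nonempty f
  · rintro U V hU hV ⟨x, ⟨⟨a₁, a₂⟩, rfl⟩, hxU⟩ ⟨y, ⟨⟨b₁, b₂⟩, rfl⟩, hyV⟩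
    -- find c₁ with f (c₁, a₂) ∈ U and f (c₁, b₂) ∈ V
    obtain ⟨c₁, hc₁U, hc₁V⟩ :=
      nonempty_preirreducible_inter ((h₂ a₂).isOpen_preimage U hU)
        ((h₂ b₂).isOpen_preimage V hV) ⟨a₁, hxU⟩ ⟨b₁, hyV⟩
    -- find c₂ with f (c₁, c₂) ∈ U ∩ V
    obtain ⟨c₂, hc₂U, hc₂V⟩ :=
      nonempty_preirreducible_inter ((h₁ c₁).isOpen_preimage U hU)
        ((h₁ c₁).isOpen_preimage V hV) ⟨a₂, hc₁U⟩ ⟨b₂, hc₁V⟩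
    exact ⟨f (c₁, c₂), ⟨(c₁, c₂), rfl⟩, hc₂U, hc₂V⟩
end

section
/- Let F be a field, A a nonempty set, and R a subalgebra of the F-algebra of all functions A → F. Equip A with the Zariski topology of the function algebra R. Then A is an irreducible topological space if and only if R is an integral domain. -/
/-- The Zariski topology on a set `A` associated with a subalgebra `R` of the
`F`-algebra of all functions `A → F`: it is generated by the basic open sets
`{a | f a ≠ 0}` for `f ∈ R`; equivalently, its closed sets are exactly the common
zero sets of subsets of `R`. -/
def zariskiTopology {F A : Type*} [Field F] (R : Subalgebra F (A → F)) :
    TopologicalSpace A :=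
  TopologicalSpace.generateFrom {U : Set A | ∃ f ∈ R, U = {a : A | f a ≠ 0}}

theorem zariski_basis {F A : Type*} [Field F] (R : Subalgebra F (A → F)) :
    @TopologicalSpace.IsTopologicalBasis A (zariskiTopology R)
      {U : Set A | ∃ f ∈ R, U = {a : A | f a ≠ 0}} := by
  letI := zariskiTopology R
  refine ⟨?_, ?_, rfl⟩
  · rintro t₁ ⟨f, hf, rfl⟩ t₂ ⟨g, hg, rfl⟩ x hx
    refine ⟨{a : A | (f * g) a ≠ 0}, ⟨f * g, mul_mem hf hg, rfl⟩, ?_, ?_⟩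
    · exact mul_ne_zero hx.1 hx.2
    · intro a ha
      exact ⟨left_ne_zero_of_mul ha, right_ne_zero_of_mul ha⟩
  · refine Set.eq_univ_of_univ_subset ?_
    intro a _
    exact Set.mem_sUnion.2 ⟨{a : A | (1 : A → F) a ≠ 0}, ⟨1, one_mem R, rfl⟩,
      by simp⟩

set_option synthInstance.maxHeartbeats 800000 in
/-- A nonempty set `A` with coordinate ring `R ⊆ (A → F)`, equipped with the
Zariski topology of `R`, is an irreducible topological space if and only if `R`
is an integral domain. -/
theorem irreducibleSpace_iff_isDomain
    {F A : Type*} [Field F] [Nonempty A] (R : Subalgebra F (A → F)) :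
    @IrreducibleSpace A (zariskiTopology R) ↔ IsDomain R := by
  letI := zariskiTopology R
  have hb := zariski_basis R
  constructor
  · intro h
    have hnt : Nontrivial R := by
      refine ⟨0, 1, fun h01 => ?_⟩
      obtain ⟨a⟩ := ‹Nonempty A›
      have := congrArg (fun f : R => (f : A → F) a) h01
      simpa using this
    have : NoZeroDivisors R := by
      constructor
      intro f g hfg
      by_contra hc
      push_neg at hc
      obtain ⟨hf, hg⟩ := hc
      have hf' : ∃ a, (f : A → F) a ≠ 0 := by
        by_contra hca
        push_neg at hca
        exact hf (Subtype.ext (funext fun a => hca a))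
      have hg' : ∃ a, (g : A → F) a ≠ 0 := by
        by_contra hca
        push_neg at hca
        exact hg (Subtype.ext (funext fun a => hca a))
      obtain ⟨a, ha⟩ := hf'
      obtain ⟨b, hbne⟩ := hg'
      have hu : IsOpen {x : A | (f : A → F) x ≠ 0} :=
        hb.isOpen ⟨f, f.2, rfl⟩
      have hv : IsOpen {x : A | (g : A → F) x ≠ 0} :=
        hb.isOpen ⟨g, g.2, rfl⟩
      haveI := h
      obtain ⟨c, -, hcf, hcg⟩ := (IrreducibleSpace.isIrreducible_univ A).2 _ _ hu hv
        ⟨a, Set.mem_univ a, ha⟩ ⟨b, Set.mem_univ b, hbne⟩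
      have : ((f * g : R) : A → F) c ≠ 0 := mul_ne_zero hcf hcg
      rw [hfg] at this
      simp at this
    exact NoZeroDivisors.to_isDomain R
  · intro h
    haveI := h
    refine { toPreirreducibleSpace := ⟨?_⟩, toNonempty := ‹Nonempty A› }
    rintro u v hu hv ⟨a, -, ha⟩ ⟨b, -, hbv⟩
    obtain ⟨_, ⟨f, hfR, rfl⟩, haf, hfu⟩ := hb.exists_subset_of_mem_open ha hu
    obtain ⟨_, ⟨g, hgR, rfl⟩, hbg, hgv⟩ := hb.exists_subset_of_mem_open hbv hv
    have hf : (⟨f, hfR⟩ : R) ≠ 0 := fun h0 => haf (by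
      have := congrArg (fun r : R => (r : A → F) a) h0
      simpa using this)
    have hg : (⟨g, hgR⟩ : R) ≠ 0 := fun h0 => hbg (by
      have := congrArg (fun r : R => (r : A → F) b) h0
      simpa using this)
    have hfg : (⟨f, hfR⟩ : R) * ⟨g, hgR⟩ ≠ 0 := mul_ne_zero hf hg
    have : ∃ c, f c * g c ≠ 0 := by
      by_contra hca
      push_neg at hca
      exact hfg (Subtype.ext (funext fun c => hca c))
    obtain ⟨c, hc⟩ := this
    exact ⟨c, Set.mem_univ c, hfu (left_ne_zero_of_mul hc), hgv (right_ne_zero_of_mul hc)⟩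
end

section
/- Let F be a field, let A and B be nonempty sets, and let R_A be a subalgebra of the F-algebra of all functions A → F and R_B a subalgebra of the F-algebra of all functions B → F. Equip A with the Zariski topology of R_A, equip B with the Zariski topology of R_B, and equip A × B with the Zariski topology of the subalgebra R of functions A × B → F generated by the functions (a, b) ↦ f(a)·g(b) with f ∈ R_A and g ∈ R_B. If A and B are irreducible topological spaces, then A × B is an irreducible topological space. -/
open Topology

lemma zariski_basic_open {F A : Type*} [Field F] (R : Subalgebra F (A → F))
    {f : A → F} (hf : f ∈ R) :
    IsOpen[zariskiTopology R] {a : A | f a ≠ 0} :=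
  TopologicalSpace.GenerateOpen.basic _ ⟨f, hf, rfl⟩

lemma zariski_exists_basic {F A : Type*} [Field F] (R : Subalgebra F (A → F))
    {U : Set A} (hU : IsOpen[zariskiTopology R] U) {a : A} (ha : a ∈ U) :
    ∃ f ∈ R, f a ≠ 0 ∧ {x : A | f x ≠ 0} ⊆ U := by
  induction hU with
  | basic V hV =>
    obtain ⟨f, hf, rfl⟩ := hV
    exact ⟨f, hf, ha, subset_rfl⟩
  | univ => exact ⟨1, one_mem R, one_ne_zero, fun _ _ => trivial⟩
  | inter V W hV hW ihV ihW =>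
    obtain ⟨f, hf, hfa, hfV⟩ := ihV ha.1
    obtain ⟨g, hg, hga, hgW⟩ := ihW ha.2
    refine ⟨f * g, mul_mem hf hg, ?_, fun x hx => ⟨hfV ?_, hgW ?_⟩⟩
    · exact mul_ne_zero hfa hga
    · exact fun h => hx (by simp [Pi.mul_apply, h])
    · exact fun h => hx (by simp [Pi.mul_apply, h])
  | sUnion T hT ih =>
    obtain ⟨V, hVT, haV⟩ := ha
    obtain ⟨f, hf, hfa, hfV⟩ := ih V hVT haV
    exact ⟨f, hf, hfa, hfV.trans (Set.subset_sUnion_of_mem hVT)⟩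

/-- Slices of functions in the tensor product algebra belong to the factor algebras. -/
lemma slice_mem {F A B : Type*} [Field F]
    (RA : Subalgebra F (A → F)) (RB : Subalgebra F (B → F)) {h : A × B → F}
    (hh : h ∈ Algebra.adjoin F
      {h : A × B → F | ∃ f ∈ RA, ∃ g ∈ RB, h = fun p => f p.1 * g p.2}) :
    (∀ b : B, (fun a => h (a, b)) ∈ RA) ∧ (∀ a : A, (fun b => h (a, b)) ∈ RB) := by
  induction hh using Algebra.adjoin_induction with
  | mem x hx =>
    obtain ⟨f, hf, g, hg, rfl⟩ := hx
    constructor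
    · intro b
      have : (fun a => f a * g b) = g b • f := by ext a; simp [mul_comm]
      simpa [this] using RA.smul_mem hf (g b)
    · intro a
      have : (fun b => f a * g b) = f a • g := by ext b; simp
      simpa [this] using RB.smul_mem hg (f a)
  | algebraMap r =>
    exact ⟨fun b => RA.algebraMap_mem r, fun a => RB.algebraMap_mem r⟩
  | add x y hx hy ihx ihy =>
    exact ⟨fun b => add_mem (ihx.1 b) (ihy.1 b), fun a => add_mem (ihx.2 a) (ihy.2 a)⟩
  | mul x y hx hy ihx ihy =>
    exact ⟨fun b => mul_mem (ihx.1 b) (ihy.1 b), fun a => mul_mem (ihx.2 a) (ihy.2 a)⟩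

/-- If `(A, R_A)` and `(B, R_B)` are irreducible sets with coordinate rings, then
`A × B`, equipped with the Zariski topology of the subalgebra of functions
`A × B → F` generated by the products `(a, b) ↦ f a * g b` with `f ∈ R_A`,
`g ∈ R_B` (the tensor product coordinate ring), is irreducible. -/
theorem prod_irreducibleSpace_of_irreducibleSpace
    {F A B : Type*} [Field F] [Nonempty A] [Nonempty B]
    (RA : Subalgebra F (A → F)) (RB : Subalgebra F (B → F))
    (hA : @IrreducibleSpace A (zariskiTopology RA))
    (hB : @IrreducibleSpace B (zariskiTopology RB)) :
    @IrreducibleSpace (A × B)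
      (zariskiTopology (Algebra.adjoin F
        {h : A × B → F | ∃ f ∈ RA, ∃ g ∈ RB, h = fun p => f p.1 * g p.2})) := by
  set R := Algebra.adjoin F
      {h : A × B → F | ∃ f ∈ RA, ∃ g ∈ RB, h = fun p => f p.1 * g p.2} with hR
  letI tA := zariskiTopology RA
  letI tB := zariskiTopology RB
  letI tP := zariskiTopology R
  refine @IrreducibleSpace.mk _ tP ⟨?_⟩ inferInstance
  rintro U V hU hV ⟨⟨a₁, b₁⟩, -, hp₁⟩ ⟨⟨a₂, b₂⟩, -, hp₂⟩
  obtain ⟨h₁, hh₁, hh₁p, hh₁U⟩ := zariski_exists_basic R hU hp₁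
  obtain ⟨h₂, hh₂, hh₂p, hh₂V⟩ := zariski_exists_basic R hV hp₂
  have s₁ := slice_mem RA RB hh₁
  have s₂ := slice_mem RA RB hh₂
  -- find a with h₁ (a, b₁) ≠ 0 and h₂ (a, b₂) ≠ 0
  obtain ⟨a, -, ha₁, ha₂⟩ :=
    hA.isPreirreducible_univ {x | h₁ (x, b₁) ≠ 0} {x | h₂ (x, b₂) ≠ 0}
      (zariski_basic_open RA (s₁.1 b₁)) (zariski_basic_open RA (s₂.1 b₂))
      ⟨a₁, trivial, hh₁p⟩ ⟨a₂, trivial, hh₂p⟩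
  obtain ⟨b, -, hb₁, hb₂⟩ :=
    hB.isPreirreducible_univ {y | h₁ (a, y) ≠ 0} {y | h₂ (a, y) ≠ 0}
      (zariski_basic_open RB (s₁.2 a)) (zariski_basic_open RB (s₂.2 a))
      ⟨b₁, trivial, ha₁⟩ ⟨b₂, trivial, ha₂⟩
  exact ⟨(a, b), trivial, hh₁U hb₁, hh₂V hb₂⟩
end
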